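/- Let s > 0, σ > 0, S₀ > 0, x > 0, let G be a standard Gaussian random variable, and set S_s = S₀·exp(σ√s·G - σ²s/2), β = (ln(x/S₀) + σ²s/2)/σ, and d₁ = (β + σs)/√s. Then E[1_{S_s ≥ x}·(√s·G + σs)/S_s] = (e^{σ²s}/S₀)·√(s/(2π))·exp(-d₁²/2). Consequently, for 0 < s < t and W_{s,t} = (t-s)·(√s·G + σs) - s·√(t-s)·G' with G' a standard Gaussian independent of G, one has E[1_{S_s ≥ x}·W_{s,t}/S_s] = (t-s)·(e^{σ²s}/S₀)·√(s/(2π))·exp(-d₁²/2). -/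

import Mathlib

open MeasureTheory ProbabilityTheory Real Set Filter
open scoped NNReal ENNReal

lemma aux_density (f : ℝ → ℝ) :
    ∫ x, f x ∂(gaussianReal 0 1) = ∫ x, gaussianPDFReal 0 1 x * f x := by
  rw [gaussianReal_of_var_ne_zero 0 one_ne_zero]
  have h : (gaussianPDF 0 1) = fun x => ((Real.toNNReal (gaussianPDFReal 0 1 x) : ℝ≥0) : ℝ≥0∞) := by
    funext x; rfl
  rw [h, integral_withDensity_eq_integral_smul
    ((measurable_gaussianPDFReal 0 1).real_toNNReal) f]
  congr 1
  funext x
  simp [NNReal.smul_def, Real.coe_toNNReal _ (gaussianPDFReal_nonneg 0 1 x)]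

lemma aux_ftc (a c : ℝ) :
    ∫ x in Set.Ioi a, (x + c) * Real.exp (-(x + c) ^ 2 / 2) = Real.exp (-(a + c) ^ 2 / 2) := by
  have hint : IntegrableOn (fun x : ℝ => (x + c) * Real.exp (-(x + c) ^ 2 / 2)) (Set.Ioi a) := by
    have h := (integrable_mul_exp_neg_mul_sq (b := (1:ℝ)/2) (by norm_num)).comp_add_right c
    have heq : (fun x : ℝ => (fun y : ℝ => y * Real.exp (-((1:ℝ)/2) * y ^ 2)) (x + c))
        = fun x : ℝ => (x + c) * Real.exp (-(x + c) ^ 2 / 2) := by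
      funext x; ring_nf
    rw [heq] at h
    exact h.integrableOn
  have hderiv : ∀ x ∈ Set.Ioi a, HasDerivAt (fun x : ℝ => -Real.exp (-(x + c) ^ 2 / 2))
      ((x + c) * Real.exp (-(x + c) ^ 2 / 2)) x := by
    intro x _
    have h1 : HasDerivAt (fun x : ℝ => -(x + c) ^ 2 / 2) (-(x + c)) x := by
      have := (((hasDerivAt_id x).add_const c).pow 2).neg.div_const 2
      exact this.congr_deriv (by simp only [id]; ring)
    have := h1.exp.neg
    exact this.congr_deriv (by ring)
  have htend : Tendsto (fun x : ℝ => -Real.exp (-(x + c) ^ 2 / 2)) atTop (nhds 0) := by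
    rw [← neg_zero]
    apply Tendsto.neg
    apply Real.tendsto_exp_atBot.comp
    have h1 : Tendsto (fun x : ℝ => (x + c) ^ 2) atTop atTop :=
      (tendsto_pow_atTop (two_ne_zero)).comp (tendsto_atTop_add_const_right _ c tendsto_id)
    have h2 : Tendsto (fun y : ℝ => -y / 2) atTop atBot := by
      apply Tendsto.atBot_div_const (by norm_num : (0:ℝ) < 2)
      exact tendsto_neg_atTop_atBot
    exact h2.comp h1
  have hcont : ContinuousWithinAt (fun x : ℝ => -Real.exp (-(x + c) ^ 2 / 2)) (Set.Ici a) a :=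
    (Continuous.neg (by continuity)).continuousWithinAt
  have := integral_Ioi_of_hasDerivAt_of_tendsto hcont hderiv hint htend
  rw [this]; ring

lemma aux_odd : ∫ x : ℝ, gaussianPDFReal 0 1 x * x = 0 := by
  have heven : ∀ x : ℝ, gaussianPDFReal 0 1 (-x) = gaussianPDFReal 0 1 x := by
    intro x; simp [gaussianPDFReal]
  have h := MeasureTheory.integral_neg_eq_self (fun x : ℝ => gaussianPDFReal 0 1 x * x) volume
  have h2 : (fun x : ℝ => gaussianPDFReal 0 1 (-x) * (-x))
      = fun x : ℝ => -(gaussianPDFReal 0 1 x * x) := by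
    funext x; rw [heven]; ring
  rw [h2, integral_neg] at h
  linarith
open MeasureTheory ProbabilityTheory Real Set Filter
open scoped NNReal ENNReal

lemma aux_pdf : gaussianPDFReal 0 1 = fun x => (Real.sqrt (2*Real.pi))⁻¹ * Real.exp (-x^2/2) := by
  funext x; simp [gaussianPDFReal]

lemma int_shift_mul (c : ℝ) :
    Integrable (fun x : ℝ => (x + c) * Real.exp (-(x + c) ^ 2 / 2)) := by
  have h := (integrable_mul_exp_neg_mul_sq (b := (1:ℝ)/2) (by norm_num)).comp_add_right c
  have heq : (fun x : ℝ => (fun y : ℝ => y * Real.exp (-((1:ℝ)/2) * y ^ 2)) (x + c))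
      = fun x : ℝ => (x + c) * Real.exp (-(x + c) ^ 2 / 2) := by
    funext x; ring_nf
  rwa [heq] at h

lemma int_shift_exp (c : ℝ) :
    Integrable (fun x : ℝ => Real.exp (-(x + c) ^ 2 / 2)) := by
  have h := (integrable_exp_neg_mul_sq (b := (1:ℝ)/2) (by norm_num)).comp_add_right c
  have heq : (fun x : ℝ => (fun y : ℝ => Real.exp (-((1:ℝ)/2) * y ^ 2)) (x + c))
      = fun x : ℝ => Real.exp (-(x + c) ^ 2 / 2) := by
    funext x; ring_nf
  rwa [heq] at h

lemma aux_pt (s σ S₀ : ℝ) (hs : 0 < s) (hσ : 0 < σ) (hS₀ : 0 < S₀) (a y : ℝ) :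
    gaussianPDFReal 0 1 y * ((if a ≤ y then (1:ℝ) else 0) * (Real.sqrt s * y + σ * s) /
        (S₀ * Real.exp (σ * Real.sqrt s * y - σ^2*s/2)))
    = Set.indicator (Set.Ici a)
        (fun y => (Real.exp (σ^2*s) / S₀ * Real.sqrt s * (Real.sqrt (2*Real.pi))⁻¹)
          * ((y + σ*Real.sqrt s) * Real.exp (-(y + σ*Real.sqrt s)^2/2))) y := by
  by_cases hy : a ≤ y
  · rw [Set.indicator_of_mem (Set.mem_Ici.mpr hy), if_pos hy, aux_pdf]
    have hc2 : (σ*Real.sqrt s)^2 = σ^2*s := by rw [mul_pow, Real.sq_sqrt hs.le]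
    have hms := Real.mul_self_sqrt hs.le
    have hsplit : Real.sqrt s * y + σ*s = Real.sqrt s * (y + σ*Real.sqrt s) := by
      nlinarith [hms]
    have hE : Real.exp (-(y+σ*Real.sqrt s)^2/2)
        = Real.exp (-y^2/2) * Real.exp (-(σ*Real.sqrt s*y - σ^2*s/2)) * Real.exp (-(σ^2*s)) := by
      rw [← Real.exp_add, ← Real.exp_add]; congr 1; linear_combination -hc2/2
    rw [hsplit, hE, Real.exp_neg (σ*Real.sqrt s*y - σ^2*s/2), Real.exp_neg (σ^2*s)]
    have h1 : Real.exp (σ*Real.sqrt s*y - σ^2*s/2) ≠ 0 := Real.exp_ne_zero _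
    have h2 : Real.exp (σ^2*s) ≠ 0 := Real.exp_ne_zero _
    have h3 : Real.sqrt (2*Real.pi) ≠ 0 := ne_of_gt (Real.sqrt_pos.mpr (by positivity))
    field_simp
  · rw [Set.indicator_of_notMem (fun h => hy (Set.mem_Ici.mp h)), if_neg hy]; simp

lemma aux_pt2 (s σ S₀ : ℝ) (hs : 0 < s) (hσ : 0 < σ) (hS₀ : 0 < S₀) (a y : ℝ) :
    gaussianPDFReal 0 1 y * ((if a ≤ y then (1:ℝ) else 0) /
        (S₀ * Real.exp (σ * Real.sqrt s * y - σ^2*s/2)))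
    = Set.indicator (Set.Ici a)
        (fun y => (Real.exp (σ^2*s) / S₀ * (Real.sqrt (2*Real.pi))⁻¹)
          * Real.exp (-(y + σ*Real.sqrt s)^2/2)) y := by
  by_cases hy : a ≤ y
  · rw [Set.indicator_of_mem (Set.mem_Ici.mpr hy), if_pos hy, aux_pdf]
    have hc2 : (σ*Real.sqrt s)^2 = σ^2*s := by rw [mul_pow, Real.sq_sqrt hs.le]
    have hE : Real.exp (-(y+σ*Real.sqrt s)^2/2)
        = Real.exp (-y^2/2) * Real.exp (-(σ*Real.sqrt s*y - σ^2*s/2)) * Real.exp (-(σ^2*s)) := by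
      rw [← Real.exp_add, ← Real.exp_add]; congr 1; linear_combination -hc2/2
    rw [hE, Real.exp_neg (σ*Real.sqrt s*y - σ^2*s/2), Real.exp_neg (σ^2*s)]
    have h1 : Real.exp (σ*Real.sqrt s*y - σ^2*s/2) ≠ 0 := Real.exp_ne_zero _
    have h2 : Real.exp (σ^2*s) ≠ 0 := Real.exp_ne_zero _
    have h3 : Real.sqrt (2*Real.pi) ≠ 0 := ne_of_gt (Real.sqrt_pos.mpr (by positivity))
    field_simp
  · rw [Set.indicator_of_notMem (fun h => hy (Set.mem_Ici.mp h)), if_neg hy]; simp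

lemma aux_wd (g : ℝ → ℝ) :
    Integrable g (gaussianReal 0 1) ↔
      Integrable (fun x => gaussianPDFReal 0 1 x * g x) := by
  rw [gaussianReal_of_var_ne_zero 0 one_ne_zero,
    integrable_withDensity_iff (measurable_gaussianPDF 0 1)
      (ae_of_all _ fun x => ENNReal.ofReal_lt_top)]
  constructor <;> intro h <;> [skip; skip] <;>
  · have heq : (fun x => g x * (gaussianPDF 0 1 x).toReal)
        = fun x => gaussianPDFReal 0 1 x * g x := by
      funext x
      rw [gaussianPDF, ENNReal.toReal_ofReal (gaussianPDFReal_nonneg 0 1 x), mul_comm]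
    first
      | rwa [heq] at h
      | rwa [heq]

lemma aux_int1 (s σ S₀ : ℝ) (hs : 0 < s) (hσ : 0 < σ) (hS₀ : 0 < S₀) (a : ℝ) :
    Integrable (fun y => (if a ≤ y then (1:ℝ) else 0) * (Real.sqrt s * y + σ * s) /
        (S₀ * Real.exp (σ * Real.sqrt s * y - σ^2*s/2))) (gaussianReal 0 1) := by
  rw [aux_wd]
  have heq : (fun y => gaussianPDFReal 0 1 y * ((if a ≤ y then (1:ℝ) else 0) * (Real.sqrt s * y + σ * s) /
        (S₀ * Real.exp (σ * Real.sqrt s * y - σ^2*s/2))))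
      = Set.indicator (Set.Ici a)
        (fun y => (Real.exp (σ^2*s) / S₀ * Real.sqrt s * (Real.sqrt (2*Real.pi))⁻¹)
          * ((y + σ*Real.sqrt s) * Real.exp (-(y + σ*Real.sqrt s)^2/2))) := by
    funext y; exact aux_pt s σ S₀ hs hσ hS₀ a y
  rw [heq]
  exact (((int_shift_mul (σ*Real.sqrt s)).const_mul _)).indicator measurableSet_Ici

lemma aux_int2 (s σ S₀ : ℝ) (hs : 0 < s) (hσ : 0 < σ) (hS₀ : 0 < S₀) (a : ℝ) :
    Integrable (fun y => (if a ≤ y then (1:ℝ) else 0) /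
        (S₀ * Real.exp (σ * Real.sqrt s * y - σ^2*s/2))) (gaussianReal 0 1) := by
  rw [aux_wd]
  have heq : (fun y => gaussianPDFReal 0 1 y * ((if a ≤ y then (1:ℝ) else 0) /
        (S₀ * Real.exp (σ * Real.sqrt s * y - σ^2*s/2))))
      = Set.indicator (Set.Ici a)
        (fun y => (Real.exp (σ^2*s) / S₀ * (Real.sqrt (2*Real.pi))⁻¹)
          * Real.exp (-(y + σ*Real.sqrt s)^2/2)) := by
    funext y; exact aux_pt2 s σ S₀ hs hσ hS₀ a y
  rw [heq]
  exact (((int_shift_exp (σ*Real.sqrt s)).const_mul _)).indicator measurableSet_Ici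

lemma aux_int_id : Integrable (fun y : ℝ => y) (gaussianReal 0 1) := by
  rw [aux_wd]
  have heq : (fun x : ℝ => gaussianPDFReal 0 1 x * x)
      = fun x : ℝ => (Real.sqrt (2*Real.pi))⁻¹ * ((x + 0) * Real.exp (-(x + 0)^2/2)) := by
    funext x; rw [aux_pdf]; ring_nf
  rw [heq]
  exact (int_shift_mul 0).const_mul _

lemma aux_mean : ∫ y, y ∂(gaussianReal 0 1) = 0 := by
  rw [aux_density]; exact aux_odd

lemma aux_main (s σ S₀ : ℝ) (hs : 0 < s) (hσ : 0 < σ) (hS₀ : 0 < S₀) (a : ℝ) :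
    ∫ y, (if a ≤ y then (1:ℝ) else 0) * (Real.sqrt s * y + σ * s) /
        (S₀ * Real.exp (σ * Real.sqrt s * y - σ^2*s/2)) ∂(gaussianReal 0 1)
      = (Real.exp (σ^2*s) / S₀) * Real.sqrt (s/(2*Real.pi))
          * Real.exp (-(a + σ*Real.sqrt s)^2/2) := by
  rw [aux_density]
  simp_rw [aux_pt s σ S₀ hs hσ hS₀ a]
  rw [integral_indicator measurableSet_Ici, integral_Ici_eq_integral_Ioi,
    integral_const_mul, aux_ftc]
  rw [Real.sqrt_div hs.le]
  ring

theorem stmt12 {Ω : Type*} [MeasurableSpace Ω] (P : Measure Ω) [IsProbabilityMeasure P]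
    (s t σ S₀ x : ℝ) (hs : 0 < s) (hst : s < t) (hσ : 0 < σ) (hS₀ : 0 < S₀) (hx : 0 < x)
    (G G' : Ω → ℝ) (hmG : Measurable G) (hmG' : Measurable G')
    (hG : P.map G = gaussianReal 0 1) (hG' : P.map G' = gaussianReal 0 1)
    (hindep : IndepFun G G' P)
    (Ss : Ω → ℝ)
    (hSs : ∀ ω, Ss ω = S₀ * Real.exp (σ * Real.sqrt s * G ω - σ ^ 2 * s / 2))
    (β d₁ : ℝ)
    (hβ : β = (Real.log (x / S₀) + σ ^ 2 * s / 2) / σ)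
    (hd₁ : d₁ = (β + σ * s) / Real.sqrt s)
    (Wst : Ω → ℝ)
    (hWst : ∀ ω, Wst ω = (t - s) * (Real.sqrt s * G ω + σ * s)
      - s * (Real.sqrt (t - s) * G' ω)) :
    (∫ ω, (if x ≤ Ss ω then (1 : ℝ) else 0) * (Real.sqrt s * G ω + σ * s) / Ss ω ∂P
      = (Real.exp (σ ^ 2 * s) / S₀) * Real.sqrt (s / (2 * Real.pi))
          * Real.exp (-d₁ ^ 2 / 2)) ∧
    (∫ ω, (if x ≤ Ss ω then (1 : ℝ) else 0) * Wst ω / Ss ω ∂P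
      = (t - s) * (Real.exp (σ ^ 2 * s) / S₀) * Real.sqrt (s / (2 * Real.pi))
          * Real.exp (-d₁ ^ 2 / 2)) := by
  have hsqrt_pos : 0 < Real.sqrt s := Real.sqrt_pos.mpr hs
  have hms : Real.sqrt s * Real.sqrt s = s := Real.mul_self_sqrt hs.le
  have hc_pos : 0 < σ * Real.sqrt s := mul_pos hσ hsqrt_pos
  set a : ℝ := (Real.log (x / S₀) + σ ^ 2 * s / 2) / (σ * Real.sqrt s) with ha_def
  set F : ℝ → ℝ := fun y => (if a ≤ y then (1:ℝ) else 0) * (Real.sqrt s * y + σ * s) /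
      (S₀ * Real.exp (σ * Real.sqrt s * y - σ^2*s/2)) with hF_def
  set H : ℝ → ℝ := fun y => (if a ≤ y then (1:ℝ) else 0) /
      (S₀ * Real.exp (σ * Real.sqrt s * y - σ^2*s/2)) with hH_def
  have had1 : d₁ = a + σ * Real.sqrt s := by
    rw [hd₁, hβ, ha_def, add_div, div_div]
    congr 1
    rw [show σ * s = (σ * Real.sqrt s) * Real.sqrt s by rw [mul_assoc, hms],
      mul_div_assoc, div_self hsqrt_pos.ne', mul_one]
  have hcond : ∀ ω, (x ≤ Ss ω) ↔ (a ≤ G ω) := by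
    intro ω
    rw [hSs ω]
    have e2 : Real.log (x / S₀) ≤ σ * Real.sqrt s * G ω - σ^2*s/2
        ↔ x / S₀ ≤ Real.exp (σ * Real.sqrt s * G ω - σ^2*s/2) :=
      Real.log_le_iff_le_exp (div_pos hx hS₀)
    have e1 : x / S₀ ≤ Real.exp (σ * Real.sqrt s * G ω - σ^2*s/2)
        ↔ x ≤ S₀ * Real.exp (σ * Real.sqrt s * G ω - σ^2*s/2) := div_le_iff₀' hS₀
    have e3 : a ≤ G ω ↔ Real.log (x / S₀) + σ ^ 2 * s / 2 ≤ (σ * Real.sqrt s) * G ω := by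
      rw [ha_def]
      exact div_le_iff₀' hc_pos
    constructor
    · intro h
      exact e3.mpr (by linarith [e2.mpr (e1.mpr h)])
    · intro h
      exact e1.mp (e2.mp (by linarith [e3.mp h]))
  have hmF : Measurable F := by
    apply Measurable.div
    · exact (Measurable.ite measurableSet_Ici measurable_const measurable_const).mul (by fun_prop)
    · fun_prop
  have hmH : Measurable H := by
    apply Measurable.div
    · exact Measurable.ite measurableSet_Ici measurable_const measurable_const
    · fun_prop
  have hrw1 : ∀ ω, (if x ≤ Ss ω then (1 : ℝ) else 0) * (Real.sqrt s * G ω + σ * s) / Ss ω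
      = F (G ω) := by
    intro ω
    rw [if_congr (hcond ω) rfl rfl, hSs ω]
  have part1 : ∫ ω, (if x ≤ Ss ω then (1 : ℝ) else 0) * (Real.sqrt s * G ω + σ * s) / Ss ω ∂P
      = (Real.exp (σ ^ 2 * s) / S₀) * Real.sqrt (s / (2 * Real.pi))
          * Real.exp (-d₁ ^ 2 / 2) := by
    rw [integral_congr_ae (ae_of_all _ hrw1),
      ← integral_map hmG.aemeasurable hmF.aestronglyMeasurable, hG, hF_def]
    have := aux_main s σ S₀ hs hσ hS₀ a
    rw [this, had1]
  refine ⟨part1, ?_⟩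
  -- part 2
  have hintF : Integrable (fun ω => F (G ω)) P := by
    have : Integrable F (P.map G) := by rw [hG, hF_def]; exact aux_int1 s σ S₀ hs hσ hS₀ a
    exact (integrable_map_measure hmF.aestronglyMeasurable hmG.aemeasurable).mp this
  have hintHG : Integrable (fun ω => H (G ω)) P := by
    have : Integrable H (P.map G) := by rw [hG, hH_def]; exact aux_int2 s σ S₀ hs hσ hS₀ a
    exact (integrable_map_measure hmH.aestronglyMeasurable hmG.aemeasurable).mp this
  have hintG' : Integrable G' P := by
    have : Integrable (fun y : ℝ => y) (P.map G') := by rw [hG']; exact aux_int_id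
    exact (integrable_map_measure measurable_id.aestronglyMeasurable hmG'.aemeasurable).mp this
  have hindHG : IndepFun (H ∘ G) G' P := by
    have := hindep.comp hmH measurable_id
    exact this
  have hintMul : Integrable (fun ω => H (G ω) * G' ω) P :=
    hindHG.integrable_mul hintHG hintG'
  have hG'zero : ∫ ω, G' ω ∂P = 0 := by
    have : ∫ ω, G' ω ∂P = ∫ y, y ∂(P.map G') :=
      (integral_map hmG'.aemeasurable measurable_id.aestronglyMeasurable).symm
    rw [this, hG', aux_mean]
  have hcross : ∫ ω, H (G ω) * G' ω ∂P = 0 := by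
    have h1 := hindHG.integral_mul_eq_mul_integral hintHG.aestronglyMeasurable hintG'.aestronglyMeasurable
    simp only [Pi.mul_apply, Function.comp_apply] at h1
    have h2 : integral P G' = 0 := hG'zero
    rw [h1, h2, mul_zero]
  have hrw2 : ∀ ω, (if x ≤ Ss ω then (1 : ℝ) else 0) * Wst ω / Ss ω
      = (t - s) * F (G ω) - (s * Real.sqrt (t - s)) * (H (G ω) * G' ω) := by
    intro ω
    rw [hWst ω, if_congr (hcond ω) rfl rfl, hSs ω]
    simp only [hF_def, hH_def]
    ring
  rw [integral_congr_ae (ae_of_all _ hrw2),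
    integral_sub (hintF.const_mul _) (hintMul.const_mul _),
    integral_const_mul, integral_const_mul, hcross,
    integral_congr_ae (ae_of_all _ (fun ω => (hrw1 ω).symm)), part1]
  ring
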